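/- For x ≥ 0 and d > 0, define J_{x,d}(h) := (1/d) ∫_0^d h(x+u) du on H_w. Then J_{x,d} = I_d ∘ S_x is a bounded linear functional on H_w, and its Riesz representative h_{x,d} ∈ H_w is given piecewise by: h_{x,d}(y) = 1 + ∫_0^y 1/w(s) ds for 0 ≤ y ≤ x; h_{x,d}(y) = 1 + ∫_0^x 1/w(s) ds + ∫_0^{y−x} (d−s)/(d·w(s+x)) ds for x < y ≤ x+d; and h_{x,d}(y) = 1 + ∫_0^x 1/w(s) ds + ∫_0^d (d−s)/(d·w(s+x)) ds for y > x+d. Equivalently, h_{x,d} = S_x^*(h_d^I). -/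

import Mathlib

open MeasureTheory Real Set

/-- A Filipović weight function: measurable, increasing on `[0,∞)`, `w(0)=1`,
`w ≥ 1`, and `∫_0^∞ 1/w < ∞`. -/
structure FiliWeight (w : ℝ → ℝ) : Prop where
  meas : Measurable w
  mono : MonotoneOn w (Set.Ici 0)
  one_le : ∀ x, 0 ≤ x → 1 ≤ w x
  at_zero : w 0 = 1
  int_inv : MeasureTheory.IntegrableOn (fun s => (w s)⁻¹) (Set.Ioi 0)

/-- Membership of `h` (with weak derivative `h'`) in the Filipović space `H_w`:
`h` is absolutely continuous on `[0,∞)` with derivative `h'` and finite weighted energy. -/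
structure FiliMem (w : ℝ → ℝ) (h h' : ℝ → ℝ) : Prop where
  meas_deriv : Measurable h'
  abs_cont : ∀ x, 0 ≤ x → h x = h 0 + ∫ s in (0:ℝ)..x, h' s
  energy : MeasureTheory.IntegrableOn (fun y => (h' y)^2 * w y) (Set.Ioi 0)

/-- The inner product `⟨f,g⟩_w = f(0)g(0) + ∫_0^∞ f'(y)g'(y) w(y) dy` on `H_w`. -/
noncomputable def filiInner (w f g f' g' : ℝ → ℝ) : ℝ :=
  f 0 * g 0 + ∫ y in Set.Ioi (0:ℝ), f' y * g' y * w y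

/-- The squared norm `‖f‖_w^2 = |f(0)|^2 + ∫_0^∞ |f'(y)|^2 w(y) dy` on `H_w`. -/
noncomputable def filiNormSq (w f f' : ℝ → ℝ) : ℝ :=
  (f 0)^2 + ∫ y in Set.Ioi (0:ℝ), (f' y)^2 * w y

/-- The piecewise function `h_{x,d}` of the paper. -/
noncomputable def hxd (w : ℝ → ℝ) (x d : ℝ) : ℝ → ℝ := fun y =>
  if y ≤ x then 1 + ∫ s in (0:ℝ)..y, (w s)⁻¹
  else (1 + ∫ s in (0:ℝ)..x, (w s)⁻¹) + ∫ s in (0:ℝ)..(min (y - x) d), (d - s) / (d * w (s + x))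

/-- Its weak derivative. -/
noncomputable def hxd' (w : ℝ → ℝ) (x d : ℝ) : ℝ → ℝ := fun y =>
  if y ≤ x then (w y)⁻¹
  else if y ≤ x + d then (d - (y - x)) / (d * w y) else 0

/-- a.e. equality from everywhere-on-set equality -/
lemma eqOn_ae {s : Set ℝ} (hs : MeasurableSet s) {f g : ℝ → ℝ} (h : ∀ y ∈ s, f y = g y) :
    f =ᵐ[volume.restrict s] g := (ae_restrict_iff' hs).2 (ae_of_all _ h)

/-- Weighted Cauchy-Schwarz for integrals. -/
lemma cs_weighted {f g W : ℝ → ℝ} {μ : Measure ℝ}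
    (hW : ∀ᵐ y ∂μ, 0 ≤ W y)
    (hf : Integrable (fun y => f y ^ 2 * W y) μ)
    (hg : Integrable (fun y => g y ^ 2 * W y) μ)
    (hfg : Integrable (fun y => f y * g y * W y) μ) :
    (∫ y, f y * g y * W y ∂μ) ^ 2 ≤ (∫ y, f y ^ 2 * W y ∂μ) * ∫ y, g y ^ 2 * W y ∂μ := by
  set P := ∫ y, f y ^ 2 * W y ∂μ with hP
  set I := ∫ y, f y * g y * W y ∂μ with hI
  set Q := ∫ y, g y ^ 2 * W y ∂μ with hQ
  have key : ∀ t : ℝ, 0 ≤ P * (t * t) + (2 * I) * t + Q := by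
    intro t
    have expand : (∫ y, (t * f y + g y) ^ 2 * W y ∂μ) = P * (t * t) + (2 * I) * t + Q := by
      rw [show (fun y => (t * f y + g y) ^ 2 * W y)
          = fun y => (t * t) * (f y ^ 2 * W y) + ((2 * t) * (f y * g y * W y) + g y ^ 2 * W y)
          from funext fun y => by ring]
      have i1 : Integrable (fun y => (t * t) * (f y ^ 2 * W y)) μ := hf.const_mul _
      have i2 : Integrable (fun y => (2 * t) * (f y * g y * W y)) μ := hfg.const_mul _
      have i3 : Integrable (fun y => (2 * t) * (f y * g y * W y) + g y ^ 2 * W y) μ := i2.add hg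
      rw [integral_add i1 i3, integral_add i2 hg, integral_const_mul, integral_const_mul]
      ring
    rw [← expand]
    exact integral_nonneg_of_ae (hW.mono fun y hy => mul_nonneg (sq_nonneg _) hy)
  have hdisc := discrim_le_zero key
  rw [discrim] at hdisc
  nlinarith [hdisc]

private lemma wpos {w : ℝ → ℝ} (hw : FiliWeight w) {y : ℝ} (hy : 0 ≤ y) : 0 < w y :=
  lt_of_lt_of_le one_pos (hw.one_le y hy)

private lemma phi_intervalIntegrable {w : ℝ → ℝ} (hw : FiliWeight w) {x d : ℝ} (hx : 0 ≤ x)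
    (hd : 0 < d) {a b : ℝ} (ha : 0 ≤ a) (hb : 0 ≤ b) :
    IntervalIntegrable (fun s => (d - min s d) / (d * w (s + x))) volume a b := by
  rw [intervalIntegrable_iff]
  have hmeas : Measurable fun s => (d - min s d) / (d * w (s + x)) :=
    (measurable_const.sub (measurable_id.min measurable_const)).div
      (measurable_const.mul (hw.meas.comp (measurable_add_const x)))
  apply Integrable.mono' (g := fun _ => (1:ℝ))
      ((integrableOn_const_iff (C := (1:ℝ))).mpr (Or.inr (by rw [Set.uIoc]; exact measure_Ioc_lt_top)))
      hmeas.aestronglyMeasurable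
  refine (ae_restrict_iff' measurableSet_uIoc).2 (ae_of_all _ fun s hs => ?_)
  have hs0 : 0 ≤ s := by
    rcases Set.mem_uIoc.mp hs with h | h
    · linarith [h.1]
    · linarith [h.1]
  have hw1 : 1 ≤ w (s + x) := hw.one_le _ (by linarith)
  have h0 : 0 ≤ min s d := le_min hs0 hd.le
  have h1 : min s d ≤ d := min_le_right _ _
  rw [Real.norm_eq_abs, abs_of_nonneg (div_nonneg (by linarith) (by nlinarith))]
  exact div_le_one_of_le₀ (by nlinarith) (by nlinarith)

private lemma part3 {w : ℝ → ℝ} (hw : FiliWeight w) {x : ℝ} (hx : 0 ≤ x) {d : ℝ} (hd : 0 < d)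
    (y : ℝ) (hy : 0 ≤ y) :
    hxd w x d y = (1 + ∫ s in (0:ℝ)..(min y x), (w s)⁻¹)
      + ∫ s in (0:ℝ)..(max (y - x) 0), (w s / w (s + x)) * ((d - min s d) / (d * w s)) := by
  by_cases hyx : y ≤ x
  · simp only [hxd]
    rw [if_pos hyx, min_eq_left hyx, max_eq_right (by linarith : y - x ≤ 0),
      intervalIntegral.integral_same, add_zero]
  · push_neg at hyx
    simp only [hxd]
    rw [if_neg (not_le.mpr hyx), min_eq_right (le_of_lt hyx),
      max_eq_left (by linarith : (0:ℝ) ≤ y - x)]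
    congr 1
    set T := y - x with hT
    have hT0 : 0 < T := by simp only [hT]; linarith
    have hcongr : (∫ s in (0:ℝ)..T, (w s / w (s + x)) * ((d - min s d) / (d * w s)))
        = ∫ s in (0:ℝ)..T, (d - min s d) / (d * w (s + x)) := by
      apply intervalIntegral.integral_congr
      intro s hs
      rw [Set.uIcc_of_le (le_of_lt hT0)] at hs
      have h1 : w s ≠ 0 := ne_of_gt (wpos hw hs.1)
      have h2 : w (s + x) ≠ 0 := ne_of_gt (wpos hw (by linarith [hs.1]))
      field_simp
    rw [hcongr]
    by_cases hTd : T ≤ d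
    · rw [min_eq_left hTd]
      apply intervalIntegral.integral_congr
      intro s hs
      rw [Set.uIcc_of_le (le_of_lt hT0)] at hs
      try dsimp only
      rw [min_eq_left (le_trans hs.2 hTd)]
    · push_neg at hTd
      rw [min_eq_right (le_of_lt hTd)]
      have hadj := intervalIntegral.integral_add_adjacent_intervals
        (phi_intervalIntegrable hw hx hd le_rfl hd.le)
        (phi_intervalIntegrable hw hx hd hd.le (by linarith : (0:ℝ) ≤ T))
      have hzero : (∫ s in d..T, (d - min s d) / (d * w (s + x))) = 0 := by
        rw [intervalIntegral.integral_congr (g := fun _ => (0:ℝ)) ?_]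
        · simp
        · intro s hs
          rw [Set.uIcc_of_le (le_of_lt hTd)] at hs
          try dsimp only
          rw [min_eq_right hs.1]
          simp
      have hfirst : (∫ s in (0:ℝ)..d, (d - min s d) / (d * w (s + x)))
          = ∫ s in (0:ℝ)..d, (d - s) / (d * w (s + x)) := by
        apply intervalIntegral.integral_congr
        intro s hs
        rw [Set.uIcc_of_le hd.le] at hs
        try dsimp only
        rw [min_eq_left hs.2]
      linarith [hadj]

private lemma h'_int {w h h' : ℝ → ℝ} (hw : FiliWeight w) (hm : FiliMem w h h') (b : ℝ) :
    IntegrableOn h' (Set.Ioc 0 b) := by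
  have hb : IntegrableOn (fun y => (1 + (h' y)^2 * w y) / 2) (Set.Ioc 0 b) :=
    (((integrableOn_const_iff (C := (1:ℝ))).mpr (Or.inr measure_Ioc_lt_top)).add
      (hm.energy.mono_set Set.Ioc_subset_Ioi_self)).div_const 2
  apply Integrable.mono' hb hm.meas_deriv.aestronglyMeasurable.restrict
  refine (ae_restrict_iff' measurableSet_Ioc).2 (ae_of_all _ fun y hy => ?_)
  have h1 : 1 ≤ w y := hw.one_le y (le_of_lt hy.1)
  rw [Real.norm_eq_abs]
  nlinarith [sq_nonneg (|h' y| - 1), sq_abs (h' y), sq_nonneg (h' y), abs_nonneg (h' y)]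

private lemma part1 {w : ℝ → ℝ} (hw : FiliWeight w) {x : ℝ} (hx : 0 ≤ x) {d : ℝ} (hd : 0 < d)
    {h h' : ℝ → ℝ} (hm : FiliMem w h h') :
    (1 / d) * ∫ u in (0:ℝ)..d, h (x + u) = filiInner w h (hxd w x d) h' (hxd' w x d) := by
  set F : ℝ × ℝ → ℝ := fun p => if p.2 ≤ x + p.1 then h' p.2 else 0 with hF_def
  have hint_xd : IntegrableOn h' (Set.Ioc 0 (x + d)) := h'_int hw hm (x + d)
  have hFmeas : Measurable F := Measurable.ite
    (measurableSet_le measurable_snd (measurable_const.add measurable_fst))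
    (hm.meas_deriv.comp measurable_snd) measurable_const
  have hbound : Integrable (fun p : ℝ × ℝ => (1:ℝ) * |h' p.2|)
      ((volume.restrict (Set.Ioc 0 d)).prod (volume.restrict (Set.Ioc 0 (x + d)))) :=
    Integrable.mul_prod ((integrableOn_const_iff (C := (1:ℝ))).mpr (Or.inr measure_Ioc_lt_top)) hint_xd.abs
  have hF : Integrable F
      ((volume.restrict (Set.Ioc 0 d)).prod (volume.restrict (Set.Ioc 0 (x + d)))) := by
    apply Integrable.mono' hbound hFmeas.aestronglyMeasurable (ae_of_all _ fun p => ?_)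
    have hfp : F p = if p.2 ≤ x + p.1 then h' p.2 else 0 := rfl
    rw [hfp, Real.norm_eq_abs, one_mul]
    by_cases hp : p.2 ≤ x + p.1
    · rw [if_pos hp]
    · rw [if_neg hp, abs_zero]
      exact abs_nonneg _
  have A1 : ∀ u ∈ Set.Ioc (0:ℝ) d,
      (∫ s in Set.Ioc (0:ℝ) (x + d), F (u, s)) = ∫ s in Set.Ioc (0:ℝ) (x + u), h' s := by
    intro u hu
    have h1 : (fun s => F (u, s)) = (Set.Iic (x + u)).indicator h' := by
      funext s
      rw [Set.indicator_apply]
      simp only [hF_def, Set.mem_Iic]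
    have hset : Set.Iic (x + u) ∩ Set.Ioc 0 (x + d) = Set.Ioc 0 (x + u) := by
      ext s
      simp only [Set.mem_inter_iff, Set.mem_Iic, Set.mem_Ioc]
      constructor
      · rintro ⟨h1, h2, h3⟩; exact ⟨h2, h1⟩
      · rintro ⟨h2, h3⟩; exact ⟨h3, h2, by linarith [hu.2]⟩
    rw [h1, integral_indicator measurableSet_Iic, Measure.restrict_restrict measurableSet_Iic,
      hset]
  have B1 : ∀ s ∈ Set.Ioc (0:ℝ) (x + d),
      (∫ u in Set.Ioc (0:ℝ) d, F (u, s)) = h' s * (d - max (s - x) 0) := by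
    intro s hs
    have h1 : (fun u => F (u, s)) = (Set.Ici (s - x)).indicator (fun _ => h' s) := by
      funext u
      rw [Set.indicator_apply]
      simp only [hF_def, Set.mem_Ici, sub_le_iff_le_add']
    rw [h1, integral_indicator_const _ measurableSet_Ici, measureReal_def,
      Measure.restrict_apply measurableSet_Ici, smul_eq_mul]
    by_cases hsx : s ≤ x
    · rw [show Set.Ici (s - x) ∩ Set.Ioc 0 d = Set.Ioc 0 d from ?_, Real.volume_Ioc,
        ENNReal.toReal_ofReal (by linarith), max_eq_right (by linarith : s - x ≤ 0)]
      · ring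
      · ext u
        simp only [Set.mem_inter_iff, Set.mem_Ici, Set.mem_Ioc]
        constructor
        · rintro ⟨_, h2⟩; exact h2
        · rintro ⟨h2, h3⟩; exact ⟨by linarith, h2, h3⟩
    · push_neg at hsx
      rw [show Set.Ici (s - x) ∩ Set.Ioc 0 d = Set.Icc (s - x) d from ?_, Real.volume_Icc,
        ENNReal.toReal_ofReal (by linarith [hs.2]), max_eq_left (by linarith : (0:ℝ) ≤ s - x)]
      · ring
      · ext u
        simp only [Set.mem_inter_iff, Set.mem_Ici, Set.mem_Ioc, Set.mem_Icc]
        constructor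
        · rintro ⟨h1, h2, h3⟩; exact ⟨h1, h3⟩
        · rintro ⟨h1, h3⟩; exact ⟨h1, by linarith, h3⟩
  have hGsec : Integrable (fun u => ∫ s in Set.Ioc (0:ℝ) (x + d), F (u, s))
      (volume.restrict (Set.Ioc 0 d)) := hF.integral_prod_left
  have hGint : Integrable (fun u => ∫ s in Set.Ioc (0:ℝ) (x + u), h' s)
      (volume.restrict (Set.Ioc (0:ℝ) d)) :=
    hGsec.congr (eqOn_ae measurableSet_Ioc A1)
  have hE : (∫ u in (0:ℝ)..d, h (x + u))
      = d * h 0 + ∫ u in Set.Ioc (0:ℝ) d, ∫ s in Set.Ioc (0:ℝ) (x + u), h' s := by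
    rw [intervalIntegral.integral_of_le hd.le]
    have hpt : ∀ u ∈ Set.Ioc (0:ℝ) d,
        h (x + u) = h 0 + ∫ s in Set.Ioc (0:ℝ) (x + u), h' s := by
      intro u hu
      rw [hm.abs_cont (x + u) (by linarith [hu.1]),
        intervalIntegral.integral_of_le (by linarith [hu.1] : (0:ℝ) ≤ x + u)]
    rw [setIntegral_congr_fun measurableSet_Ioc hpt,
      integral_add ((integrableOn_const_iff (C := h 0)).mpr (Or.inr measure_Ioc_lt_top)) hGint,
      setIntegral_const, measureReal_def, Real.volume_Ioc, sub_zero, ENNReal.toReal_ofReal hd.le, smul_eq_mul]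
  have hD : (∫ u in Set.Ioc (0:ℝ) d, ∫ s in Set.Ioc (0:ℝ) (x + u), h' s)
      = ∫ s in Set.Ioc (0:ℝ) (x + d), h' s * (d - max (s - x) 0) :=
    calc (∫ u in Set.Ioc (0:ℝ) d, ∫ s in Set.Ioc (0:ℝ) (x + u), h' s)
        = ∫ u in Set.Ioc (0:ℝ) d, ∫ s in Set.Ioc (0:ℝ) (x + d), F (u, s) :=
          (setIntegral_congr_fun measurableSet_Ioc A1).symm
      _ = ∫ s in Set.Ioc (0:ℝ) (x + d), ∫ u in Set.Ioc (0:ℝ) d, F (u, s) :=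
          integral_integral_swap (f := fun u s => F (u, s)) (by exact hF)
      _ = ∫ s in Set.Ioc (0:ℝ) (x + d), h' s * (d - max (s - x) 0) :=
          setIntegral_congr_fun measurableSet_Ioc B1
  have hint1 : IntegrableOn (fun s => h' s * (d - max (s - x) 0)) (Set.Ioc (0:ℝ) x) :=
    ((h'_int hw hm x).mul_const d).congr (eqOn_ae measurableSet_Ioc
      (fun s hs => by
        try dsimp only
        rw [max_eq_right (by linarith [hs.2] : s - x ≤ 0), sub_zero]))
  have hint2 : IntegrableOn (fun s => h' s * (d - max (s - x) 0)) (Set.Ioc x (x + d)) := by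
    apply Integrable.mono' ((hint_xd.mono_set (Set.Ioc_subset_Ioc_left hx)).abs.mul_const d)
      (((hm.meas_deriv.mul (measurable_const.sub
        ((measurable_id.sub measurable_const).max measurable_const)) :
        Measurable fun s : ℝ => h' s * (d - max (s - x) 0))).aestronglyMeasurable.restrict)
    refine (ae_restrict_iff' measurableSet_Ioc).2 (ae_of_all _ fun s hs => ?_)
    rw [Real.norm_eq_abs]
    simp only [Pi.mul_apply]
    rw [abs_mul]
    apply mul_le_mul_of_nonneg_left _ (abs_nonneg _)
    rw [max_eq_left (by linarith [hs.1] : (0:ℝ) ≤ s - x),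
      abs_of_nonneg (by linarith [hs.2] : (0:ℝ) ≤ d - (s - x))]
    linarith [hs.1]
  have hF2 : (∫ s in Set.Ioc (0:ℝ) (x + d), h' s * (d - max (s - x) 0))
      = (∫ s in Set.Ioc (0:ℝ) x, h' s) * d
        + ∫ s in Set.Ioc x (x + d), h' s * (d - (s - x)) := by
    rw [show Set.Ioc (0:ℝ) (x + d) = Set.Ioc 0 x ∪ Set.Ioc x (x + d) from
      (Set.Ioc_union_Ioc_eq_Ioc hx (by linarith)).symm,
      setIntegral_union (Set.Ioc_disjoint_Ioc_of_le le_rfl) measurableSet_Ioc hint1 hint2]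
    congr 1
    · rw [← integral_mul_const]
      exact setIntegral_congr_fun measurableSet_Ioc fun s hs => by
        try dsimp only
        rw [max_eq_right (by linarith [hs.2] : s - x ≤ 0), sub_zero]
    · exact setIntegral_congr_fun measurableSet_Ioc fun s hs => by
        try dsimp only
        rw [max_eq_left (by linarith [hs.1] : (0:ℝ) ≤ s - x)]
  set g' := hxd' w x d with hg'def
  have hg0 : hxd w x d 0 = 1 := by
    simp only [hxd, if_pos hx, intervalIntegral.integral_same, add_zero]
  have hg'1 : ∀ y ∈ Set.Ioc (0:ℝ) x, h' y = h' y * g' y * w y := by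
    intro y hy
    have hwy : w y ≠ 0 := ne_of_gt (wpos hw (le_of_lt hy.1))
    simp only [hg'def, hxd', if_pos hy.2]
    field_simp
  have hg'2 : ∀ y ∈ Set.Ioc x (x + d), h' y * ((d - (y - x)) / d) = h' y * g' y * w y := by
    intro y hy
    have hwy : w y ≠ 0 := ne_of_gt (wpos hw (le_of_lt (lt_of_le_of_lt hx hy.1)))
    simp only [hg'def, hxd', if_neg (not_le.mpr hy.1), if_pos hy.2]
    field_simp
  have hg'3 : ∀ y ∈ Set.Ioi (x + d), h' y * g' y * w y = 0 := by
    intro y hy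
    have hy' : x + d < y := hy
    simp only [hg'def, hxd', if_neg (not_le.mpr (by linarith : x < y)),
      if_neg (not_le.mpr hy')]
    ring
  have hI1 : IntegrableOn (fun y => h' y * g' y * w y) (Set.Ioc (0:ℝ) x) :=
    (h'_int hw hm x).congr (eqOn_ae measurableSet_Ioc hg'1)
  have hI2base : IntegrableOn (fun y => h' y * ((d - (y - x)) / d)) (Set.Ioc x (x + d)) := by
    apply Integrable.mono' (hint_xd.mono_set (Set.Ioc_subset_Ioc_left hx)).abs
      ((hm.meas_deriv.mul ((measurable_const.sub
        (measurable_id.sub measurable_const)).div measurable_const)).aestronglyMeasurable.restrict)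
    refine (ae_restrict_iff' measurableSet_Ioc).2 (ae_of_all _ fun yy hyy => ?_)
    rw [Real.norm_eq_abs]
    simp only [Pi.mul_apply]
    rw [abs_mul]
    have h1 : |(d - (yy - x)) / d| ≤ 1 := by
      rw [abs_of_nonneg (div_nonneg (by linarith [hyy.2]) hd.le)]
      exact div_le_one_of_le₀ (by linarith [hyy.1]) hd.le
    exact mul_le_of_le_one_right (abs_nonneg _) h1
  have hI2 : IntegrableOn (fun y => h' y * g' y * w y) (Set.Ioc x (x + d)) :=
    hI2base.congr (eqOn_ae measurableSet_Ioc hg'2)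
  have hI3 : IntegrableOn (fun y => h' y * g' y * w y) (Set.Ioi (x + d)) :=
    (integrable_zero _ _ _).congr (eqOn_ae measurableSet_Ioi (fun y hy => (hg'3 y hy).symm))
  have hI12 : IntegrableOn (fun y => h' y * g' y * w y) (Set.Ioc (0:ℝ) (x + d)) := by
    rw [show Set.Ioc (0:ℝ) (x + d) = Set.Ioc 0 x ∪ Set.Ioc x (x + d) from
      (Set.Ioc_union_Ioc_eq_Ioc hx (by linarith)).symm]
    exact hI1.union hI2
  have hRHS : (∫ y in Set.Ioi (0:ℝ), h' y * g' y * w y)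
      = (∫ s in Set.Ioc (0:ℝ) x, h' s)
        + ∫ y in Set.Ioc x (x + d), h' y * ((d - (y - x)) / d) := by
    rw [show Set.Ioi (0:ℝ) = Set.Ioc 0 (x + d) ∪ Set.Ioi (x + d) from
      (Set.Ioc_union_Ioi_eq_Ioi (by linarith)).symm,
      setIntegral_union Set.Ioc_disjoint_Ioi_same measurableSet_Ioi hI12 hI3,
      show (∫ y in Set.Ioi (x + d), h' y * g' y * w y) = 0 from by
        rw [setIntegral_congr_fun measurableSet_Ioi (g := fun _ => (0:ℝ)) hg'3]
        exact integral_zero _ _,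
      add_zero,
      show Set.Ioc (0:ℝ) (x + d) = Set.Ioc 0 x ∪ Set.Ioc x (x + d) from
        (Set.Ioc_union_Ioc_eq_Ioc hx (by linarith)).symm,
      setIntegral_union (Set.Ioc_disjoint_Ioc_of_le le_rfl) measurableSet_Ioc hI1 hI2]
    congr 1
    · exact (setIntegral_congr_fun measurableSet_Ioc hg'1).symm
    · exact (setIntegral_congr_fun measurableSet_Ioc hg'2).symm
  have hlast : (∫ y in Set.Ioc x (x + d), h' y * ((d - (y - x)) / d))
      = (1 / d) * ∫ s in Set.Ioc x (x + d), h' s * (d - (s - x)) := by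
    rw [← integral_const_mul]
    exact setIntegral_congr_fun measurableSet_Ioc fun s hs => by (try dsimp only); ring
  simp only [filiInner, hg0, mul_one]
  rw [hRHS, hE, hD, hF2, hlast]
  field_simp

private lemma part2 {w : ℝ → ℝ} (hw : FiliWeight w) {x : ℝ} (hx : 0 ≤ x) {d : ℝ} (hd : 0 < d) :
    ∃ C : ℝ, 0 ≤ C ∧ ∀ h h' : ℝ → ℝ, FiliMem w h h' →
      |(1 / d) * ∫ u in (0:ℝ)..d, h (x + u)| ≤ C * Real.sqrt (filiNormSq w h h') := by
  set g' := hxd' w x d with hg'def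
  have hg'meas : Measurable g' := by
    have : Measurable fun y : ℝ => if y ≤ x then (w y)⁻¹
        else if y ≤ x + d then (d - (y - x)) / (d * w y) else 0 :=
      Measurable.ite (measurableSet_le measurable_id measurable_const) hw.meas.inv
        (Measurable.ite (measurableSet_le measurable_id measurable_const)
          ((measurable_const.sub (measurable_id.sub measurable_const)).div
            (measurable_const.mul hw.meas)) measurable_const)
    exact this
  have hQint : IntegrableOn (fun y => (g' y)^2 * w y) (Set.Ioi 0) := by
    apply Integrable.mono' hw.int_inv
      ((hg'meas.pow_const 2).mul hw.meas).aestronglyMeasurable.restrict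
    refine (ae_restrict_iff' measurableSet_Ioi).2 (ae_of_all _ fun y hy => ?_)
    have hy0 : (0:ℝ) < y := hy
    have hwy : 0 < w y := wpos hw hy0.le
    rw [Real.norm_eq_abs]
    simp only [Pi.mul_apply]
    rw [abs_of_nonneg (mul_nonneg (sq_nonneg _) hwy.le)]
    have hgy : g' y = if y ≤ x then (w y)⁻¹
        else if y ≤ x + d then (d - (y - x)) / (d * w y) else 0 := rfl
    rw [hgy]
    by_cases h1 : y ≤ x
    · rw [if_pos h1, show ((w y)⁻¹)^2 * w y = (w y)⁻¹ from by
        field_simp]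
    · rw [if_neg h1]
      push_neg at h1
      by_cases h2 : y ≤ x + d
      · rw [if_pos h2, show ((d - (y - x)) / (d * w y))^2 * w y
            = (d - (y - x))^2 / (d^2 * w y) from by field_simp]
        rw [inv_eq_one_div, div_le_div_iff₀ (by positivity) hwy]
        have e3 : (d - (y - x))^2 ≤ d^2 := by nlinarith
        nlinarith [mul_le_mul_of_nonneg_right e3 hwy.le]
      · rw [if_neg h2]
        simp [inv_nonneg.mpr hwy.le]
  refine ⟨Real.sqrt (1 + ∫ y in Set.Ioi (0:ℝ), (g' y)^2 * w y), Real.sqrt_nonneg _, ?_⟩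
  intro h h' hm
  set P := ∫ y in Set.Ioi (0:ℝ), (h' y)^2 * w y with hP
  set Q := ∫ y in Set.Ioi (0:ℝ), (g' y)^2 * w y with hQ
  have hWae : ∀ᵐ y ∂(volume.restrict (Set.Ioi (0:ℝ))), 0 ≤ w y :=
    (ae_restrict_iff' measurableSet_Ioi).2 (ae_of_all _ fun y hy => (wpos hw (le_of_lt hy)).le)
  have hfgint : IntegrableOn (fun y => h' y * g' y * w y) (Set.Ioi 0) := by
    have hbd : IntegrableOn (fun y => ((h' y)^2 * w y + (g' y)^2 * w y) / 2) (Set.Ioi 0) :=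
      (hm.energy.add hQint).div_const 2
    apply Integrable.mono' hbd
      (((hm.meas_deriv.mul hg'meas).mul hw.meas)).aestronglyMeasurable.restrict
    refine (ae_restrict_iff' measurableSet_Ioi).2 (ae_of_all _ fun y hy => ?_)
    have hwy : 0 ≤ w y := (wpos hw (le_of_lt hy)).le
    rw [Real.norm_eq_abs]
    simp only [Pi.mul_apply]
    rw [abs_mul, abs_mul, abs_of_nonneg hwy]
    nlinarith [mul_nonneg (sq_nonneg (|h' y| - |g' y|)) hwy, sq_abs (h' y), sq_abs (g' y)]
  have hcs := cs_weighted (f := h') (g := g') (W := w) hWae hm.energy hQint hfgint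
  set I := ∫ y in Set.Ioi (0:ℝ), h' y * g' y * w y with hI
  have hP0 : 0 ≤ P := setIntegral_nonneg measurableSet_Ioi fun y hy =>
    mul_nonneg (sq_nonneg _) (wpos hw (le_of_lt hy)).le
  have hQ0 : 0 ≤ Q := setIntegral_nonneg measurableSet_Ioi fun y hy =>
    mul_nonneg (sq_nonneg _) (wpos hw (le_of_lt hy)).le
  have hg0 : hxd w x d 0 = 1 := by
    simp only [hxd, if_pos hx, intervalIntegral.integral_same, add_zero]
  rw [part1 hw hx hd hm]
  simp only [filiInner, filiNormSq, hg0, mul_one, ← hI, ← hP]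
  have hIabs : |I| ≤ Real.sqrt P * Real.sqrt Q := by
    rw [show |I| = Real.sqrt (I^2) from (Real.sqrt_sq_eq_abs I).symm, ← Real.sqrt_mul hP0]
    exact Real.sqrt_le_sqrt hcs
  have h2 : h 0 * I ≤ |h 0| * |I| := by rw [← abs_mul]; exact le_abs_self _
  have hsq : (h 0 + I)^2 ≤ (1 + Q) * ((h 0)^2 + P) := by
    nlinarith [hcs, h2, hIabs, Real.sq_sqrt hP0, Real.sq_sqrt hQ0, Real.sqrt_nonneg P,
      Real.sqrt_nonneg Q, sq_nonneg (Real.sqrt Q * |h 0| - Real.sqrt P), sq_abs (h 0),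
      abs_nonneg (h 0), abs_nonneg I,
      mul_le_mul_of_nonneg_left hIabs (abs_nonneg (h 0))]
  calc |h 0 + I| = Real.sqrt ((h 0 + I)^2) := (Real.sqrt_sq_eq_abs _).symm
    _ ≤ Real.sqrt ((1 + Q) * ((h 0)^2 + P)) := Real.sqrt_le_sqrt hsq
    _ = Real.sqrt (1 + Q) * Real.sqrt ((h 0)^2 + P) := Real.sqrt_mul (by linarith) _

/-- `J_{x,d}(h) = (1/d)∫_0^d h(x+u) du = I_d(S_x h)` is a bounded linear
functional on `H_w` with Riesz representative the piecewise function `h_{x,d}`: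
`J_{x,d}(h) = ⟨h, h_{x,d}⟩_w`, where `h_{x,d} = S_x^*(h_d^I)` (the shift-adjoint
applied to the representative of `I_d`), and `h_{x,d}` has the stated piecewise form. -/
theorem statement6 (w : ℝ → ℝ) (hw : FiliWeight w) (x : ℝ) (hx : 0 ≤ x)
    (d : ℝ) (hd : 0 < d) :
    (∀ h h' : ℝ → ℝ, FiliMem w h h' →
      (1 / d) * ∫ u in (0:ℝ)..d, h (x + u)
        = filiInner w h (hxd w x d) h' (hxd' w x d)) ∧
    (∃ C : ℝ, 0 ≤ C ∧ ∀ h h' : ℝ → ℝ, FiliMem w h h' →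
      |(1 / d) * ∫ u in (0:ℝ)..d, h (x + u)| ≤ C * Real.sqrt (filiNormSq w h h')) ∧
    (∀ y : ℝ, 0 ≤ y →
      hxd w x d y
        = (1 + ∫ s in (0:ℝ)..(min y x), (w s)⁻¹)
          + ∫ s in (0:ℝ)..(max (y - x) 0), (w s / w (s + x)) * ((d - min s d) / (d * w s))) := by
  exact ⟨fun h h' hm => part1 hw hx hd hm, part2 hw hx hd, fun y hy => part3 hw hx hd y hy⟩
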